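/- For ψ ∈ L²(ℝ²), the admissibility condition 0 < C_ψ = ∫_{ℝ²} |𝓕ψ(ξ)|² / |ξ₁|² dξ < ∞ holds if and only if for a.e. ξ ∈ ℝ²∖{0}, ∫_{ℝ^×} ∫_ℝ |𝓕ψ(A_a ᵗN_s ξ)|² ds da/|a|^{3/2} = C_ψ (the same finite positive constant, independent of ξ). -/

import Mathlib

open MeasureTheory Complex
open scoped FourierTransform

noncomputable section

abbrev E2 := EuclideanSpace ℝ (Fin 2)

def e2 (u v : ℝ) : E2 := (WithLp.equiv 2 (Fin 2 → ℝ)).symm ![u, v]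

/-- the frequency point A_a ᵗN_s ξ = (aξ₁, a|a|^{-1/2}(ξ₂ - sξ₁)) -/
def freqPt (s a : ℝ) (ξ : E2) : E2 :=
  e2 (a * ξ 0) (a / Real.sqrt |a| * (ξ 1 - s * ξ 0))

/-! ### Auxiliary material for the change of variables -/

namespace ShearletAux

/-- determinant of an explicit 2x2 continuous linear map on ℝ × ℝ -/
lemma det_clm (a b c d : ℝ) :
    (((a • ContinuousLinearMap.fst ℝ ℝ ℝ + b • ContinuousLinearMap.snd ℝ ℝ ℝ)).prod
      (c • ContinuousLinearMap.fst ℝ ℝ ℝ + d • ContinuousLinearMap.snd ℝ ℝ ℝ)).det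
      = a * d - b * c := by
  rw [ContinuousLinearMap.det, ← LinearMap.det_toMatrix (Module.Basis.finTwoProd ℝ),
    Matrix.det_fin_two]
  simp [LinearMap.toMatrix_apply, Module.Basis.finTwoProd_zero, Module.Basis.finTwoProd_one,
    Module.Basis.coe_finTwoProd_repr]

def Tmap (x y : ℝ) (p : ℝ × ℝ) : ℝ × ℝ :=
  (p.2 * x, p.2 / Real.sqrt |p.2| * (y - p.1 * x))

def Dc (a : ℝ) : ℝ :=
  (1 * Real.sqrt |a| - a * (1 / (2 * Real.sqrt |a|) * (SignType.sign a : ℝ))) / Real.sqrt |a| ^ 2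

def Dmap (x y : ℝ) (p : ℝ × ℝ) : (ℝ × ℝ) →L[ℝ] (ℝ × ℝ) :=
  (x • ContinuousLinearMap.snd ℝ ℝ ℝ).prod
    ((p.2 / Real.sqrt |p.2|) • (-(x • ContinuousLinearMap.fst ℝ ℝ ℝ)) +
      (y - p.1 * x) • (Dc p.2 • ContinuousLinearMap.snd ℝ ℝ ℝ))

lemma hasFDeriv_Tmap (x y : ℝ) (p : ℝ × ℝ) (hp : p.2 ≠ 0) :
    HasFDerivAt (Tmap x y) (Dmap x y p) p := by
  have habs : |p.2| ≠ 0 := abs_ne_zero.2 hp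
  have hsq : Real.sqrt |p.2| ≠ 0 := by positivity
  have hh : HasDerivAt (fun a : ℝ => a / Real.sqrt |a|) (Dc p.2) p.2 :=
    (hasDerivAt_id p.2).div
      ((Real.hasDerivAt_sqrt habs).comp p.2 (hasDerivAt_abs hp)) hsq
  have hu : HasFDerivAt (fun p : ℝ × ℝ => p.2 / Real.sqrt |p.2|)
      (Dc p.2 • ContinuousLinearMap.snd ℝ ℝ ℝ) p :=
    hh.comp_hasFDerivAt p (hasFDerivAt_snd)
  have hv : HasFDerivAt (fun p : ℝ × ℝ => y - p.1 * x)
      (-(x • ContinuousLinearMap.fst ℝ ℝ ℝ)) p :=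
    ((hasFDerivAt_fst).mul_const x).const_sub y
  have h2 : HasFDerivAt (fun p : ℝ × ℝ => p.2 / Real.sqrt |p.2| * (y - p.1 * x))
      ((p.2 / Real.sqrt |p.2|) • (-(x • ContinuousLinearMap.fst ℝ ℝ ℝ)) +
        (y - p.1 * x) • (Dc p.2 • ContinuousLinearMap.snd ℝ ℝ ℝ)) p := hu.mul hv
  have h1 : HasFDerivAt (fun p : ℝ × ℝ => p.2 * x) (x • ContinuousLinearMap.snd ℝ ℝ ℝ) p :=
    (hasFDerivAt_snd).mul_const x
  exact h1.prodMk h2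

lemma det_Dmap (x y : ℝ) (p : ℝ × ℝ) :
    (Dmap x y p).det = x ^ 2 * (p.2 / Real.sqrt |p.2|) := by
  have h : Dmap x y p =
      (((0:ℝ) • ContinuousLinearMap.fst ℝ ℝ ℝ + x • ContinuousLinearMap.snd ℝ ℝ ℝ)).prod
      ((-(x * (p.2 / Real.sqrt |p.2|))) • ContinuousLinearMap.fst ℝ ℝ ℝ +
        ((y - p.1 * x) * Dc p.2) • ContinuousLinearMap.snd ℝ ℝ ℝ) := by
    ext q <;> simp [Dmap] <;> ring
  rw [h]
  refine (det_clm 0 x (-(x * (p.2 / Real.sqrt |p.2|))) ((y - p.1 * x) * Dc p.2)).trans ?_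
  ring

def Sset : Set (ℝ × ℝ) := {p | p.2 ≠ 0}

lemma measurableSet_Sset : MeasurableSet Sset :=
  (measurable_snd (measurableSet_singleton 0)).compl

lemma null_snd : volume {p : ℝ × ℝ | p.2 = 0} = 0 := by
  have h : {p : ℝ × ℝ | p.2 = 0} = (Set.univ : Set ℝ) ×ˢ ({0} : Set ℝ) := by
    ext p
    simp only [Set.mem_setOf_eq, Set.mem_prod, Set.mem_univ, Set.mem_singleton_iff, true_and]
  rw [h, Measure.volume_eq_prod, Measure.prod_prod]
  simp

lemma null_fst : volume {q : ℝ × ℝ | q.1 = 0} = 0 := by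
  have h : {q : ℝ × ℝ | q.1 = 0} = ({0} : Set ℝ) ×ˢ (Set.univ : Set ℝ) := by
    ext p
    simp only [Set.mem_setOf_eq, Set.mem_prod, Set.mem_univ, Set.mem_singleton_iff, and_true]
  rw [h, Measure.volume_eq_prod, Measure.prod_prod]
  simp

lemma ae_snd_ne : ∀ᵐ p : ℝ × ℝ, p.2 ≠ 0 := by
  rw [ae_iff]
  simp only [not_not]
  exact null_snd

lemma ae_fst_ne : ∀ᵐ q : ℝ × ℝ, q.1 ≠ 0 := by
  rw [ae_iff]
  simp only [not_not]
  exact null_fst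

lemma restrict_Sset : (volume : Measure (ℝ × ℝ)).restrict Sset = volume :=
  Measure.restrict_eq_self_of_ae_mem ae_snd_ne

lemma restrict_fstne : (volume : Measure (ℝ × ℝ)).restrict {q : ℝ × ℝ | q.1 ≠ 0} = volume :=
  Measure.restrict_eq_self_of_ae_mem ae_fst_ne

lemma inj_Tmap (x y : ℝ) (hx : x ≠ 0) : Set.InjOn (Tmap x y) Sset := by
  rintro ⟨s, a⟩ ha ⟨s', a'⟩ ha' h
  simp only [Tmap, Prod.mk.injEq] at h
  obtain ⟨h1, h2⟩ := h
  have haa : a = a' := by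
    field_simp at h1; exact h1
  subst haa
  have hs : Real.sqrt |a| ≠ 0 := by
    simp only [Sset, Set.mem_setOf_eq] at ha
    positivity
  have hcoef : a / Real.sqrt |a| ≠ 0 := div_ne_zero (by simpa [Sset] using ha) hs
  have h3 := mul_left_cancel₀ hcoef h2
  have h4 : s * x = s' * x := by linarith
  have hss : s = s' := by
    field_simp at h4
    exact h4
  simp [hss]

lemma image_Tmap (x y : ℝ) (hx : x ≠ 0) : Tmap x y '' Sset = {q : ℝ × ℝ | q.1 ≠ 0} := by
  ext q
  constructor
  · rintro ⟨p, hp, rfl⟩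
    exact mul_ne_zero hp hx
  · intro hq
    set a := q.1 / x with hadef
    have ha : a ≠ 0 := div_ne_zero hq hx
    have hs : Real.sqrt |a| ≠ 0 := by positivity
    refine ⟨((y - q.2 * Real.sqrt |a| / a) / x, a), ha, ?_⟩
    simp only [Tmap]
    have h1 : y - (y - q.2 * Real.sqrt |a| / a) / x * x = q.2 * Real.sqrt |a| / a := by
      rw [div_mul_cancel₀ _ hx]; ring
    refine Prod.ext ?_ ?_
    · simp [hadef, div_mul_cancel₀ _ hx]
    · simp only [h1]
      field_simp

/-- pointwise jacobian computation -/
lemma ptwise (x a G : ℝ) (hx : x ≠ 0) (ha : a ≠ 0) :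
    |x ^ 2 * (a / Real.sqrt |a|)| * (G / (a * x) ^ 2) = G * |a| ^ (-(3:ℝ)/2) := by
  have hap : (0:ℝ) < |a| := abs_pos.2 ha
  have hs : (0:ℝ) < Real.sqrt |a| := Real.sqrt_pos.2 hap
  have habs : |x ^ 2 * (a / Real.sqrt |a|)| = x ^ 2 * Real.sqrt |a| := by
    rw [abs_mul, abs_div, _root_.abs_of_nonneg (Real.sqrt_nonneg _), _root_.abs_pow, _root_.sq_abs,
      Real.div_sqrt]
  have hkey : Real.sqrt |a| / a ^ 2 = |a| ^ (-(3:ℝ)/2) := by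
    rw [Real.sqrt_eq_rpow, ← _root_.sq_abs, ← Real.rpow_natCast |a| 2, ← Real.rpow_sub hap]
    norm_num
  rw [habs, ← hkey]
  field_simp

lemma eqOn_jac (x y : ℝ) (hx : x ≠ 0) (G : ℝ × ℝ → ℝ) :
    Set.EqOn (fun p => |(Dmap x y p).det| • (G (Tmap x y p) / (Tmap x y p).1 ^ 2))
      (fun p => G (Tmap x y p) * |p.2| ^ (-(3:ℝ)/2)) Sset := by
  intro p hp
  have hp2 : p.2 ≠ 0 := hp
  simp only [det_Dmap, smul_eq_mul]
  have h1 : (Tmap x y p).1 = p.2 * x := rfl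
  rw [h1]
  exact ptwise x p.2 (G (Tmap x y p)) hx hp2

/-- Change of variables : value -/
lemma cov_integral (x y : ℝ) (hx : x ≠ 0) (G : ℝ × ℝ → ℝ) :
    (∫ q in {q : ℝ × ℝ | q.1 ≠ 0}, G q / q.1 ^ 2) =
      ∫ p in Sset, G (Tmap x y p) * |p.2| ^ (-(3:ℝ)/2) := by
  rw [← image_Tmap x y hx,
    integral_image_eq_integral_abs_det_fderiv_smul volume measurableSet_Sset
      (fun p hp => (hasFDeriv_Tmap x y p hp).hasFDerivWithinAt) (inj_Tmap x y hx)
      (fun q => G q / q.1 ^ 2)]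
  exact setIntegral_congr_fun measurableSet_Sset (eqOn_jac x y hx G)

/-- Change of variables : integrability -/
lemma cov_integrable (x y : ℝ) (hx : x ≠ 0) (G : ℝ × ℝ → ℝ) :
    IntegrableOn (fun q => G q / q.1 ^ 2) {q : ℝ × ℝ | q.1 ≠ 0} ↔
      IntegrableOn (fun p => G (Tmap x y p) * |p.2| ^ (-(3:ℝ)/2)) Sset := by
  rw [← image_Tmap x y hx,
    integrableOn_image_iff_integrableOn_abs_det_fderiv_smul volume measurableSet_Sset
      (fun p hp => (hasFDeriv_Tmap x y p hp).hasFDerivWithinAt) (inj_Tmap x y hx)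
      (fun q => G q / q.1 ^ 2)]
  exact integrableOn_congr_fun (eqOn_jac x y hx G) measurableSet_Sset

/-! ### The measure-preserving identification ℝ × ℝ ≃ E2 -/

def me : (ℝ × ℝ) ≃ᵐ E2 :=
  (MeasurableEquiv.finTwoArrow).symm.trans (MeasurableEquiv.toLp 2 (Fin 2 → ℝ))

lemma coe_me (q : ℝ × ℝ) : me q = e2 q.1 q.2 := rfl

lemma mp : MeasurePreserving me volume volume :=
  ((EuclideanSpace.volume_preserving_symm_measurableEquiv_toLp (Fin 2)).symm _).comp
    ((volume_preserving_finTwoArrow ℝ).symm)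

@[simp] lemma e2_apply_zero (u v : ℝ) : e2 u v 0 = u := rfl
@[simp] lemma e2_apply_one (u v : ℝ) : e2 u v 1 = v := rfl

lemma null_E2 : volume {ξ : E2 | ξ 0 = 0} = 0 := by
  have hmeas : MeasurableSet {ξ : E2 | ξ 0 = 0} :=
    (measurableSet_singleton 0).preimage (by fun_prop)
  have h := mp.measure_preimage hmeas.nullMeasurableSet
  have hpre : (⇑me) ⁻¹' {ξ : E2 | ξ 0 = 0} = {q : ℝ × ℝ | q.1 = 0} := rfl
  rw [hpre, null_fst] at h
  exact h.symm

lemma ae_E2_ne : ∀ᵐ ξ : E2, ξ 0 ≠ 0 := by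
  rw [ae_iff]
  simp only [not_not]
  exact null_E2

end ShearletAux

open ShearletAux

/-- equivalence of the two forms of the shearlet admissibility condition. -/
theorem admissibility_iff (ψ : E2 → ℂ) (hψ : MemLp ψ 2 volume) (C : ℝ) :
    (0 < C ∧ Integrable (fun ξ : E2 => ‖𝓕 ψ ξ‖ ^ 2 / (ξ 0) ^ 2) ∧
        (∫ ξ : E2, ‖𝓕 ψ ξ‖ ^ 2 / (ξ 0) ^ 2) = C) ↔
      (0 < C ∧ ∀ᵐ ξ : E2, ξ ≠ 0 →
        (∫ p : ℝ × ℝ, ‖𝓕 ψ (freqPt p.1 p.2 ξ)‖ ^ 2 * |p.2| ^ (-(3:ℝ)/2)) = C) := by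
  set G : ℝ × ℝ → ℝ := fun q => ‖𝓕 ψ (e2 q.1 q.2)‖ ^ 2 with hG
  -- transfer of the E2 integral to ℝ × ℝ
  have hcomp : (fun ξ : E2 => ‖𝓕 ψ ξ‖ ^ 2 / (ξ 0) ^ 2) ∘ ⇑me
      = fun q : ℝ × ℝ => G q / q.1 ^ 2 := by
    funext q
    simp only [Function.comp_apply, coe_me, hG, e2_apply_zero]
  have hIntE2 : Integrable (fun q : ℝ × ℝ => G q / q.1 ^ 2) volume ↔
      Integrable (fun ξ : E2 => ‖𝓕 ψ ξ‖ ^ 2 / (ξ 0) ^ 2) volume := by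
    have h := mp.integrable_comp_emb me.measurableEmbedding
      (g := fun ξ : E2 => ‖𝓕 ψ ξ‖ ^ 2 / (ξ 0) ^ 2)
    rwa [hcomp] at h
  have hEqE2 : (∫ ξ : E2, ‖𝓕 ψ ξ‖ ^ 2 / (ξ 0) ^ 2) = ∫ q : ℝ × ℝ, G q / q.1 ^ 2 := by
    have h := mp.integral_comp me.measurableEmbedding
      (fun ξ : E2 => ‖𝓕 ψ ξ‖ ^ 2 / (ξ 0) ^ 2)
    rw [← h]
    exact congrArg _ (by rw [← hcomp]; rfl)
  -- the double integral, for ξ with ξ 0 ≠ 0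
  have hfreq : ∀ (ξ : E2) (p : ℝ × ℝ),
      freqPt p.1 p.2 ξ = e2 (Tmap (ξ 0) (ξ 1) p).1 (Tmap (ξ 0) (ξ 1) p).2 := fun ξ p => rfl
  have hmaster : ∀ ξ : E2, ξ 0 ≠ 0 →
      (∫ p : ℝ × ℝ, ‖𝓕 ψ (freqPt p.1 p.2 ξ)‖ ^ 2 * |p.2| ^ (-(3:ℝ)/2))
        = ∫ q : ℝ × ℝ, G q / q.1 ^ 2 := by
    intro ξ hx
    have h1 : (∫ p : ℝ × ℝ, ‖𝓕 ψ (freqPt p.1 p.2 ξ)‖ ^ 2 * |p.2| ^ (-(3:ℝ)/2))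
        = ∫ p in Sset, G (Tmap (ξ 0) (ξ 1) p) * |p.2| ^ (-(3:ℝ)/2) := by
      rw [restrict_Sset]
      rfl
    rw [h1, ← cov_integral (ξ 0) (ξ 1) hx G, restrict_fstne]
  constructor
  · rintro ⟨hC, hInt, hval⟩
    refine ⟨hC, ?_⟩
    filter_upwards [ae_E2_ne] with ξ hx _
    rw [hmaster ξ hx, ← hEqE2, hval]
  · rintro ⟨hC, hae⟩
    obtain ⟨ξ, hIC, hx⟩ := (hae.and ae_E2_ne).exists
    have hξ0 : ξ ≠ 0 := fun h => hx (by simp [h])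
    have hI : (∫ p : ℝ × ℝ, ‖𝓕 ψ (freqPt p.1 p.2 ξ)‖ ^ 2 * |p.2| ^ (-(3:ℝ)/2)) = C := hIC hξ0
    have hval : (∫ q : ℝ × ℝ, G q / q.1 ^ 2) = C := by rw [← hmaster ξ hx, hI]
    -- integrability
    have hIntp : Integrable
        (fun p : ℝ × ℝ => ‖𝓕 ψ (freqPt p.1 p.2 ξ)‖ ^ 2 * |p.2| ^ (-(3:ℝ)/2)) volume := by
      by_contra h
      rw [integral_undef h] at hI
      exact hC.ne' hI.symm
    have hIntS : IntegrableOn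
        (fun p : ℝ × ℝ => G (Tmap (ξ 0) (ξ 1) p) * |p.2| ^ (-(3:ℝ)/2)) Sset volume := by
      have := hIntp.integrableOn (s := Sset)
      exact this
    have hIntfst : IntegrableOn (fun q : ℝ × ℝ => G q / q.1 ^ 2)
        {q : ℝ × ℝ | q.1 ≠ 0} volume := (cov_integrable (ξ 0) (ξ 1) hx G).2 hIntS
    have hIntfull : Integrable (fun q : ℝ × ℝ => G q / q.1 ^ 2) volume := by
      have h2 := hIntfst
      rwa [IntegrableOn, restrict_fstne] at h2
    exact ⟨hC, hIntE2.1 hIntfull, by rw [hEqE2, hval]⟩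

end
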